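/- For any real β, ω, Hermitian H, and matrix A, the operator Fourier transform satisfies ‖Â_H(ω)‖ ≤ (σ√(2π))^{-1/2} e^{-βω + σ²β²} · ‖e^{βH} A e^{-βH}‖. -/

import Mathlib

open scoped Matrix.Norms.L2Operator

open Matrix Complex Real MeasureTheory

/-- The Gaussian weight `f(t) = e^{-σ²t²} √(σ√(2/π))`. -/
noncomputable def gaussWeight (σ t : ℝ) : ℝ :=
  Real.exp (-(σ ^ 2 * t ^ 2)) * Real.sqrt (σ * Real.sqrt (2 / π))

/-- The operator Fourier transform
`Â_H(ω) = (2π)^{-1/2} ∫ e^{iHt} A e^{-iHt} e^{-iωt} f(t) dt` with Gaussian width `σ`. -/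
noncomputable def oftInt {m : ℕ} (H A : Matrix (Fin m) (Fin m) ℂ) (σ ω : ℝ) :
    Matrix (Fin m) (Fin m) ℂ :=
  ((Real.sqrt (2 * π) : ℂ))⁻¹ •
    ∫ t : ℝ, (Complex.exp (-(I * ω * t)) * (gaussWeight σ t : ℂ)) •
      (NormedSpace.exp ((I * t) • H) * A * NormedSpace.exp ((-(I * t)) • H))

namespace NormOftAux

variable {m : ℕ}

/-- Entry evaluation as a continuous linear map. -/
noncomputable def entryCLM (p q : Fin m) : Matrix (Fin m) (Fin m) ℂ →L[ℂ] ℂ :=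
  LinearMap.toContinuousLinearMap
    { toFun := fun X => X p q
      map_add' := fun _ _ => rfl
      map_smul' := fun _ _ => rfl }

lemma integral_entry {f : ℝ → Matrix (Fin m) (Fin m) ℂ} (hf : Integrable f) (p q : Fin m) :
    (∫ t, f t) p q = ∫ t, f t p q :=
  ((entryCLM p q).integral_comp_comm hf).symm

/-- Conjugation `X ↦ U X V` as a continuous linear map. -/
noncomputable def conjCLM (U V : Matrix (Fin m) (Fin m) ℂ) :
    Matrix (Fin m) (Fin m) ℂ →L[ℂ] Matrix (Fin m) (Fin m) ℂ :=
  LinearMap.toContinuousLinearMap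
    { toFun := fun X => U * X * V
      map_add' := fun X Y => by simp [Matrix.mul_add, Matrix.add_mul]
      map_smul' := fun c X => by simp [mul_smul_comm, smul_mul_assoc] }

@[simp] lemma conjCLM_apply (U V X : Matrix (Fin m) (Fin m) ℂ) :
    conjCLM U V X = U * X * V := rfl

lemma exp_smul_hermitian (H : Matrix (Fin m) (Fin m) ℂ) (hH : H.IsHermitian) (c : ℂ) :
    NormedSpace.exp (c • H) =
      (hH.eigenvectorUnitary : Matrix (Fin m) (Fin m) ℂ) *
        Matrix.diagonal (fun i => Complex.exp (c * (hH.eigenvalues i : ℂ))) *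
        star (hH.eigenvectorUnitary : Matrix (Fin m) (Fin m) ℂ) := by
  set U := (hH.eigenvectorUnitary : Matrix (Fin m) (Fin m) ℂ) with hUdef
  have hU1 : U * star U = 1 := Matrix.mem_unitaryGroup_iff.mp hH.eigenvectorUnitary.2
  have hUinv : U⁻¹ = star U := Matrix.inv_eq_right_inv hU1
  have hU2 : star U * U = 1 := Matrix.UnitaryGroup.star_mul_self hH.eigenvectorUnitary
  have hIsUnit : IsUnit U := ⟨⟨U, star U, hU1, hU2⟩, rfl⟩
  have h1 : c • H = U * (Matrix.diagonal (fun i => c * (hH.eigenvalues i : ℂ))) * U⁻¹ := by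
    rw [hUinv]
    conv_lhs => rw [hH.spectral_theorem, Unitary.conjStarAlgAut_apply]
    rw [← hUdef,
      show c • (U * diagonal (RCLike.ofReal ∘ hH.eigenvalues) * star U)
        = U * (c • diagonal (RCLike.ofReal ∘ hH.eigenvalues)) * star U by
          simp only [smul_mul_assoc, mul_smul_comm],
      ← Matrix.diagonal_smul]
    congr 2
  rw [h1, Matrix.exp_conj _ _ hIsUnit, Matrix.exp_diagonal, hUinv]
  congr 2
  ext i
  rw [Pi.exp_def]
  simp [← Complex.exp_eq_exp_ℂ]

lemma exp_mem_unitary (H : Matrix (Fin m) (Fin m) ℂ) (hH : H.IsHermitian) (c : ℂ)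
    (hc : star c = -c) :
    NormedSpace.exp (c • H) ∈ unitary (Matrix (Fin m) (Fin m) ℂ) := by
  have hstar : star (NormedSpace.exp (c • H)) = NormedSpace.exp (-(c • H)) := by
    rw [Matrix.star_eq_conjTranspose, ← Matrix.exp_conjTranspose]
    congr 1
    rw [Matrix.conjTranspose_smul, hH.eq, hc, neg_smul]
  have key : ∀ X : Matrix (Fin m) (Fin m) ℂ,
      NormedSpace.exp (-X) * NormedSpace.exp X = 1 := fun X => by
    rw [← Matrix.exp_add_of_commute (-X) X (Commute.refl X).neg_left, neg_add_cancel,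
      NormedSpace.exp_zero]
  constructor
  · rw [hstar]; exact key _
  · rw [hstar]
    simpa using key (-(c • H))

lemma norm_exp_conj (H : Matrix (Fin m) (Fin m) ℂ) (hH : H.IsHermitian) (t : ℝ)
    (B : Matrix (Fin m) (Fin m) ℂ) :
    ‖NormedSpace.exp ((I * t) • H) * B * NormedSpace.exp ((-(I * t)) • H)‖ = ‖B‖ := by
  have h1 : (NormedSpace.exp ((I * (t:ℂ)) • H)) ∈ unitary (Matrix (Fin m) (Fin m) ℂ) :=
    exp_mem_unitary H hH _ (by simp [Complex.star_def])
  have h2 : (NormedSpace.exp ((-(I * (t:ℂ))) • H)) ∈ unitary (Matrix (Fin m) (Fin m) ℂ) :=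
    exp_mem_unitary H hH _ (by simp [Complex.star_def])
  rw [CStarRing.norm_mul_mem_unitary _ h2, CStarRing.norm_mem_unitary_mul _ h1]

lemma gaussWeight_nonneg (σ t : ℝ) : 0 ≤ gaussWeight σ t := by
  unfold gaussWeight
  positivity

lemma norm_scalar (σ ω : ℝ) (t : ℝ) :
    ‖Complex.exp (-(I * ω * t)) * (gaussWeight σ t : ℂ)‖ = gaussWeight σ t := by
  rw [norm_mul, Complex.norm_exp, Complex.norm_real, Real.norm_eq_abs,
    _root_.abs_of_nonneg (gaussWeight_nonneg σ t)]
  simp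

lemma integrable_gaussWeight (σ : ℝ) (hσ : 0 < σ) (c : ℝ) :
    Integrable (fun t : ℝ => gaussWeight σ t * c) := by
  have h := (integrable_exp_neg_mul_sq (by positivity : (0:ℝ) < σ^2)).mul_const
    (Real.sqrt (σ * Real.sqrt (2 / π)) * c)
  refine h.congr (Filter.Eventually.of_forall fun t => ?_)
  unfold gaussWeight
  ring_nf

lemma integrable_main (H B : Matrix (Fin m) (Fin m) ℂ) (hH : H.IsHermitian)
    (σ : ℝ) (hσ : 0 < σ) (ω : ℝ) :
    Integrable (fun t : ℝ => (Complex.exp (-(I * ω * t)) * (gaussWeight σ t : ℂ)) •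
      (NormedSpace.exp ((I * t) • H) * B * NormedSpace.exp ((-(I * t)) • H))) := by
  have hcont : Continuous (fun t : ℝ => (Complex.exp (-(I * ω * t)) * (gaussWeight σ t : ℂ)) •
      (NormedSpace.exp ((I * t) • H) * B * NormedSpace.exp ((-(I * t)) • H))) := by
    letI : NormedAlgebra ℚ (Matrix (Fin m) (Fin m) ℂ) := NormedAlgebra.restrictScalars ℚ ℂ _
    have h1 : Continuous fun t : ℝ => NormedSpace.exp ((I * (t:ℂ)) • H) :=
      NormedSpace.exp_continuous.comp
        (((continuous_const.mul Complex.continuous_ofReal)).smul continuous_const)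
    have h2 : Continuous fun t : ℝ => NormedSpace.exp ((-(I * (t:ℂ))) • H) :=
      NormedSpace.exp_continuous.comp
        (((continuous_const.mul Complex.continuous_ofReal).neg).smul continuous_const)
    have h3 : Continuous fun t : ℝ => Complex.exp (-(I * ω * t)) * (gaussWeight σ t : ℂ) := by
      apply Continuous.mul
      · exact Complex.continuous_exp.comp
          ((continuous_const.mul Complex.continuous_ofReal).neg)
      · apply Complex.continuous_ofReal.comp
        unfold gaussWeight
        fun_prop
    exact h3.smul ((h1.mul continuous_const).mul h2)
  refine (integrable_gaussWeight σ hσ ‖B‖).mono' hcont.aestronglyMeasurable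
    (Filter.Eventually.of_forall fun t => ?_)
  rw [norm_smul, norm_scalar, norm_exp_conj H hH t B]

lemma gauss_int (σ : ℝ) (hσ : 0 < σ) (ω ν : ℝ) :
    ∫ t : ℝ, Complex.exp (-(I * ω * t)) * (gaussWeight σ t : ℂ) * Complex.exp (I * t * ν)
    = (Real.sqrt (σ * Real.sqrt (2 / π)) : ℂ) *
        (((π : ℂ) / (σ^2 : ℂ)) ^ (1/2 : ℂ) * Complex.exp (-((ν:ℂ) - ω)^2 / (4 * (σ^2:ℂ)))) := by
  have hb : (0:ℝ) < ((σ^2 : ℂ)).re := by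
    norm_cast; positivity
  have hpt : ∀ t : ℝ, Complex.exp (-(I * ω * t)) * (gaussWeight σ t : ℂ) * Complex.exp (I * t * ν)
      = (Real.sqrt (σ * Real.sqrt (2 / π)) : ℂ) *
        (Complex.exp (I * ((ν:ℂ) - ω) * t) * Complex.exp (-(σ^2:ℂ) * (t:ℂ)^2)) := by
    intro t
    rw [show I * ((ν:ℂ) - ω) * t = I * t * ν + -(I * ω * t) by ring, Complex.exp_add]
    rw [gaussWeight]
    push_cast
    ring
  rw [MeasureTheory.integral_congr_ae (Filter.Eventually.of_forall hpt),
    MeasureTheory.integral_const_mul, fourierIntegral_gaussian hb ((ν:ℂ) - ω)]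

lemma scalar_shift (σ : ℝ) (hσ : 0 < σ) (β ω ν : ℝ) :
    ∫ t : ℝ, Complex.exp (-(I * ω * t)) * (gaussWeight σ t : ℂ) * Complex.exp (I * t * ν)
    = (Real.exp (-(β*ω) + σ^2*β^2) : ℂ) * Complex.exp ((β:ℂ) * ν) *
      ∫ t : ℝ, Complex.exp (-(I * ((ω - 2*σ^2*β : ℝ) : ℂ) * t)) * (gaussWeight σ t : ℂ) *
        Complex.exp (I * t * ν) := by
  have hσ' : (σ:ℂ) ≠ 0 := by exact_mod_cast hσ.ne'
  rw [gauss_int σ hσ ω ν, gauss_int σ hσ (ω - 2*σ^2*β) ν]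
  have hexp : Complex.exp (-((ν:ℂ) - ω)^2 / (4 * (σ^2:ℂ)))
      = Complex.exp ((-(β*ω) + σ^2*β^2 : ℝ) : ℂ) * Complex.exp ((β:ℂ) * ν) *
        Complex.exp (-((ν:ℂ) - ((ω - 2*σ^2*β : ℝ) : ℂ))^2 / (4 * (σ^2:ℂ))) := by
    rw [← Complex.exp_add, ← Complex.exp_add]
    congr 1
    push_cast
    field_simp
    ring
  rw [Complex.ofReal_exp, hexp]
  ring

end NormOftAux

open NormOftAux in
/-- Base norm bound for the operator Fourier transform. -/
lemma norm_oft_base {m : ℕ} (H A : Matrix (Fin m) (Fin m) ℂ)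
    (hH : H.IsHermitian) (σ : ℝ) (hσ : 0 < σ) (ω : ℝ) :
    ‖oftInt H A σ ω‖ ≤ (Real.sqrt (σ * Real.sqrt (2 * π)))⁻¹ * ‖A‖ := by
  have hint := integrable_main H A hH σ hσ ω
  unfold oftInt
  rw [norm_smul]
  have hnc : ‖((Real.sqrt (2 * π) : ℂ))⁻¹‖ = (Real.sqrt (2 * π))⁻¹ := by
    rw [norm_inv, Complex.norm_real, Real.norm_eq_abs, _root_.abs_of_nonneg (Real.sqrt_nonneg _)]
  rw [hnc]
  have hbound : ‖∫ t : ℝ, (Complex.exp (-(I * ω * t)) * (gaussWeight σ t : ℂ)) •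
      (NormedSpace.exp ((I * t) • H) * A * NormedSpace.exp ((-(I * t)) • H))‖
      ≤ ∫ t : ℝ, gaussWeight σ t * ‖A‖ := by
    refine le_trans (norm_integral_le_integral_norm _) (le_of_eq ?_)
    refine MeasureTheory.integral_congr_ae (Filter.Eventually.of_forall fun t => ?_)
    beta_reduce
    rw [norm_smul, norm_scalar, norm_exp_conj H hH t A]
  have hval : ∫ t : ℝ, gaussWeight σ t * ‖A‖
      = Real.sqrt (π / σ^2) * (Real.sqrt (σ * Real.sqrt (2 / π)) * ‖A‖) := by
    have h1 : ∀ t : ℝ, gaussWeight σ t * ‖A‖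
        = Real.exp (-(σ^2) * t^2) * (Real.sqrt (σ * Real.sqrt (2 / π)) * ‖A‖) := by
      intro t; unfold gaussWeight; ring_nf
    rw [MeasureTheory.integral_congr_ae (Filter.Eventually.of_forall h1),
      MeasureTheory.integral_mul_const, integral_gaussian]
  have hconst : (Real.sqrt (2 * π))⁻¹ * (Real.sqrt (π / σ^2) * Real.sqrt (σ * Real.sqrt (2 / π)))
      = (Real.sqrt (σ * Real.sqrt (2 * π)))⁻¹ := by
    have e1 : Real.sqrt (2*π) ^ 2 = 2*π := Real.sq_sqrt (by positivity)
    have e2 : Real.sqrt (π/σ^2) ^ 2 = π/σ^2 := Real.sq_sqrt (by positivity)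
    have e4 : Real.sqrt (2/π) ^ 2 = 2/π := Real.sq_sqrt (by positivity)
    have e3 : Real.sqrt (σ * Real.sqrt (2/π)) ^ 2 = σ * Real.sqrt (2/π) :=
      Real.sq_sqrt (by positivity)
    have e5 : Real.sqrt (σ * Real.sqrt (2*π)) ^ 2 = σ * Real.sqrt (2*π) :=
      Real.sq_sqrt (by positivity)
    have hL : 0 ≤ (Real.sqrt (2 * π))⁻¹ * (Real.sqrt (π / σ^2) * Real.sqrt (σ * Real.sqrt (2 / π))) := by
      positivity
    have hR : 0 ≤ (Real.sqrt (σ * Real.sqrt (2 * π)))⁻¹ := by positivity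
    have h4 : ((Real.sqrt (2 * π))⁻¹ * (Real.sqrt (π / σ^2) * Real.sqrt (σ * Real.sqrt (2 / π))))^4
        = ((Real.sqrt (σ * Real.sqrt (2 * π)))⁻¹)^4 := by
      rw [show ((Real.sqrt (2 * π))⁻¹ * (Real.sqrt (π / σ^2) * Real.sqrt (σ * Real.sqrt (2 / π))))^4
          = ((Real.sqrt (2*π)^2)^2)⁻¹ * ((Real.sqrt (π/σ^2)^2)^2 *
            (Real.sqrt (σ * Real.sqrt (2/π))^2)^2) by ring,
        show ((Real.sqrt (σ * Real.sqrt (2 * π)))⁻¹)^4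
          = ((Real.sqrt (σ * Real.sqrt (2*π))^2)^2)⁻¹ by ring,
        e1, e2, e3, e5,
        show (σ * Real.sqrt (2/π))^2 = σ^2 * Real.sqrt (2/π)^2 by ring,
        show (σ * Real.sqrt (2*π))^2 = σ^2 * Real.sqrt (2*π)^2 by ring, e1, e4]
      have hπ : (0:ℝ) < π := Real.pi_pos
      field_simp
    exact (pow_left_strictMonoOn₀ (by norm_num : (4:ℕ) ≠ 0)).injOn hL hR h4
  calc (Real.sqrt (2 * π))⁻¹ * ‖∫ t : ℝ, (Complex.exp (-(I * ω * t)) * (gaussWeight σ t : ℂ)) •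
      (NormedSpace.exp ((I * t) • H) * A * NormedSpace.exp ((-(I * t)) • H))‖
      ≤ (Real.sqrt (2 * π))⁻¹ * (Real.sqrt (π / σ^2) * (Real.sqrt (σ * Real.sqrt (2 / π)) * ‖A‖)) := by
        refine mul_le_mul_of_nonneg_left ?_ (by positivity)
        rw [← hval]; exact hbound
  _ = (Real.sqrt (σ * Real.sqrt (2 * π)))⁻¹ * ‖A‖ := by
        rw [← hconst]; ring


open NormOftAux in
lemma oft_shift {m : ℕ} (H A : Matrix (Fin m) (Fin m) ℂ) (hH : H.IsHermitian)
    (σ : ℝ) (hσ : 0 < σ) (β ω : ℝ) :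
    oftInt H A σ ω = ((Real.exp (-(β*ω) + σ^2*β^2) : ℝ) : ℂ) •
      oftInt H (NormedSpace.exp ((β:ℂ) • H) * A * NormedSpace.exp ((-(β:ℂ)) • H)) σ
        (ω - 2*σ^2*β) := by
  set U := (hH.eigenvectorUnitary : Matrix (Fin m) (Fin m) ℂ) with hUdef
  have hU1 : U * star U = 1 := Matrix.mem_unitaryGroup_iff.mp hH.eigenvectorUnitary.2
  have hU2 : star U * U = 1 := Matrix.UnitaryGroup.star_mul_self hH.eigenvectorUnitary
  have hU1' : ∀ X : Matrix (Fin m) (Fin m) ℂ, U * (star U * X) = X := fun X => by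
    rw [← mul_assoc, hU1, one_mul]
  have hU2' : ∀ X : Matrix (Fin m) (Fin m) ℂ, star U * (U * X) = X := fun X => by
    rw [← mul_assoc, hU2, one_mul]
  set d := hH.eigenvalues with hddef
  set B := NormedSpace.exp ((β:ℂ) • H) * A * NormedSpace.exp ((-(β:ℂ)) • H) with hBdef
  set r : ℂ := ((Real.exp (-(β*ω) + σ^2*β^2) : ℝ) : ℂ) with hrdef
  -- entry formula for conjugated evolution
  have hentry : ∀ (c : ℂ) (X : Matrix (Fin m) (Fin m) ℂ) (p q : Fin m),
      (star U * (NormedSpace.exp (c • H) * X * NormedSpace.exp ((-c) • H)) * U) p q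
      = Complex.exp (c * (d p : ℂ)) * ((star U * X * U) p q) * Complex.exp (-c * (d q : ℂ)) := by
    intro c X p q
    rw [exp_smul_hermitian H hH c, exp_smul_hermitian H hH (-c), ← hUdef, ← hddef]
    have : star U * (U * Matrix.diagonal (fun i => Complex.exp (c * (d i : ℂ))) * star U * X *
        (U * Matrix.diagonal (fun i => Complex.exp (-c * (d i : ℂ))) * star U)) * U
        = Matrix.diagonal (fun i => Complex.exp (c * (d i : ℂ))) * (star U * X * U) *
          Matrix.diagonal (fun i => Complex.exp (-c * (d i : ℂ))) := by
      simp only [mul_assoc, hU2', hU2, mul_one]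
    rw [this, Matrix.mul_diagonal, Matrix.diagonal_mul]
  -- the two inner integrands
  set φ₁ : ℝ → Matrix (Fin m) (Fin m) ℂ := fun t =>
    (Complex.exp (-(I * ω * t)) * (gaussWeight σ t : ℂ)) •
      (star U * (NormedSpace.exp ((I * t) • H) * A * NormedSpace.exp ((-(I * t)) • H)) * U)
    with hφ₁def
  set φ₂ : ℝ → Matrix (Fin m) (Fin m) ℂ := fun t =>
    (Complex.exp (-(I * ((ω - 2*σ^2*β : ℝ) : ℂ) * t)) * (gaussWeight σ t : ℂ)) •
      (star U * (NormedSpace.exp ((I * t) • H) * B * NormedSpace.exp ((-(I * t)) • H)) * U)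
    with hφ₂def
  have hφ₁int : Integrable φ₁ := by
    have := (conjCLM (star U) U).integrable_comp (integrable_main H A hH σ hσ ω)
    refine this.congr (Filter.Eventually.of_forall fun t => ?_)
    simp only [conjCLM_apply, hφ₁def, mul_smul_comm, smul_mul_assoc]
  have hφ₂int : Integrable φ₂ := by
    have := (conjCLM (star U) U).integrable_comp (integrable_main H B hH σ hσ (ω - 2*σ^2*β))
    refine this.congr (Filter.Eventually.of_forall fun t => ?_)
    simp only [conjCLM_apply, hφ₂def, mul_smul_comm, smul_mul_assoc]
  -- reduce oftInt to conjugated integrals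
  have hoft : ∀ (X : Matrix (Fin m) (Fin m) ℂ) (ω' : ℝ)
      (φ : ℝ → Matrix (Fin m) (Fin m) ℂ) (hφ : Integrable φ)
      (hφeq : ∀ t : ℝ, φ t = (Complex.exp (-(I * ω' * t)) * (gaussWeight σ t : ℂ)) •
        (star U * (NormedSpace.exp ((I * t) • H) * X * NormedSpace.exp ((-(I * t)) • H)) * U)),
      oftInt H X σ ω' = ((Real.sqrt (2 * π) : ℂ))⁻¹ • (U * (∫ t, φ t) * star U) := by
    intro X ω' φ hφ hφeq
    unfold oftInt
    congr 1
    rw [show (U * (∫ t, φ t) * star U) = conjCLM U (star U) (∫ t, φ t) from rfl,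
      ← ContinuousLinearMap.integral_comp_comm _ hφ]
    refine MeasureTheory.integral_congr_ae (Filter.Eventually.of_forall fun t => ?_)
    beta_reduce
    rw [hφeq t]
    simp only [conjCLM_apply, mul_smul_comm, smul_mul_assoc]
    congr 1
    simp only [mul_assoc, hU1', hU2', hU1, hU2, mul_one, one_mul]
  rw [hoft A ω φ₁ hφ₁int (fun t => rfl),
    hoft B (ω - 2*σ^2*β) φ₂ hφ₂int (fun t => rfl)]
  rw [smul_comm r _]
  congr 1
  rw [show r • (U * (∫ t, φ₂ t) * star U) = U * (r • (∫ t, φ₂ t)) * star U by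
    simp only [smul_mul_assoc, mul_smul_comm]]
  congr 2
  rw [← MeasureTheory.integral_smul]
  ext p q
  rw [integral_entry hφ₁int p q, integral_entry (f := fun t => r • φ₂ t) (hφ₂int.smul r) p q]
  have lhs_pt : ∀ t : ℝ, φ₁ t p q = ((star U * A * U) p q) *
      (Complex.exp (-(I * ω * t)) * (gaussWeight σ t : ℂ) *
        Complex.exp (I * t * ((d p - d q : ℝ) : ℂ))) := by
    intro t
    simp only [hφ₁def, Matrix.smul_apply, smul_eq_mul]
    rw [hentry (I * (t:ℂ)) A p q,
      show I * (t:ℂ) * ((d p - d q : ℝ) : ℂ)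
        = I * t * (d p : ℂ) + -(I * (t:ℂ)) * (d q : ℂ) by push_cast; ring,
      Complex.exp_add]
    ring
  have rhs_pt : ∀ t : ℝ, (r • φ₂ t) p q = r * Complex.exp ((β:ℂ) * ((d p - d q : ℝ) : ℂ)) *
      ((star U * A * U) p q) *
      (Complex.exp (-(I * ((ω - 2*σ^2*β : ℝ) : ℂ) * t)) * (gaussWeight σ t : ℂ) *
        Complex.exp (I * t * ((d p - d q : ℝ) : ℂ))) := by
    intro t
    simp only [hφ₂def, Matrix.smul_apply, smul_eq_mul]
    rw [hentry (I * (t:ℂ)) B p q, hBdef, hentry (β:ℂ) A p q,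
      show I * (t:ℂ) * ((d p - d q : ℝ) : ℂ)
        = I * t * (d p : ℂ) + -(I * (t:ℂ)) * (d q : ℂ) by push_cast; ring,
      show (β:ℂ) * ((d p - d q : ℝ) : ℂ)
        = (β:ℂ) * (d p : ℂ) + -(β:ℂ) * (d q : ℂ) by push_cast; ring,
      Complex.exp_add, Complex.exp_add]
    ring
  rw [MeasureTheory.integral_congr_ae (Filter.Eventually.of_forall lhs_pt),
    MeasureTheory.integral_congr_ae (Filter.Eventually.of_forall rhs_pt),
    MeasureTheory.integral_const_mul, MeasureTheory.integral_const_mul,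
    scalar_shift σ hσ β ω (d p - d q)]
  ring

/-- **Norm decay of the operator Fourier transform at large energy difference:**
`‖Â_H(ω)‖ ≤ (σ√(2π))^{-1/2} e^{-βω + σ²β²} ‖e^{βH} A e^{-βH}‖` for any real `β, ω`,
Hermitian `H`, and matrix `A`. -/
theorem norm_oft_le {m : ℕ} (H A : Matrix (Fin m) (Fin m) ℂ)
    (hH : H.IsHermitian) (σ : ℝ) (hσ : 0 < σ) (β ω : ℝ) :
    ‖oftInt H A σ ω‖ ≤
      (Real.sqrt (σ * Real.sqrt (2 * π)))⁻¹ * Real.exp (-(β * ω) + σ ^ 2 * β ^ 2) *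
        ‖NormedSpace.exp ((β : ℂ) • H) * A * NormedSpace.exp ((-(β : ℂ)) • H)‖ := by
  rw [oft_shift H A hH σ hσ β ω, norm_smul]
  have h1 : ‖((Real.exp (-(β*ω) + σ^2*β^2) : ℝ) : ℂ)‖ = Real.exp (-(β*ω) + σ^2*β^2) := by
    rw [Complex.norm_real, Real.norm_eq_abs, _root_.abs_of_pos (Real.exp_pos _)]
  rw [h1]
  have h2 := norm_oft_base H
    (NormedSpace.exp ((β:ℂ) • H) * A * NormedSpace.exp ((-(β:ℂ)) • H)) hH σ hσ
    (ω - 2*σ^2*β)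
  calc Real.exp (-(β*ω) + σ^2*β^2) *
      ‖oftInt H (NormedSpace.exp ((β:ℂ) • H) * A * NormedSpace.exp ((-(β:ℂ)) • H)) σ
        (ω - 2*σ^2*β)‖
      ≤ Real.exp (-(β*ω) + σ^2*β^2) * ((Real.sqrt (σ * Real.sqrt (2 * π)))⁻¹ *
        ‖NormedSpace.exp ((β:ℂ) • H) * A * NormedSpace.exp ((-(β:ℂ)) • H)‖) :=
        mul_le_mul_of_nonneg_left h2 (Real.exp_pos _).le
    _ = (Real.sqrt (σ * Real.sqrt (2 * π)))⁻¹ * Real.exp (-(β * ω) + σ ^ 2 * β ^ 2) *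
        ‖NormedSpace.exp ((β : ℂ) • H) * A * NormedSpace.exp ((-(β : ℂ)) • H)‖ := by
        ring
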